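/- The set ∪_{v ∈ I\{0}} H_v of complex-valued real-linear functionals vanishing on some nonzero element of the closed imaginary cone is a closed subset of (RΛ)*_C = Hom_R(RΛ, C); consequently Υ = (RΛ)*_C \ ∪_{v ∈ I\{0}} H_v is open. -/
import Mathlib


noncomputable def coxEntry {B : Type*} (M : CoxeterMatrix B) (s t : B) : ℝ :=
  if M s t = 0 then -2 else -2 * Real.cos (Real.pi / (M s t))

noncomputable def coxForm {B : Type*} [Fintype B] (M : CoxeterMatrix B) (v w : B → ℝ) : ℝ :=
  ∑ s, ∑ t, v s * w t * coxEntry M s t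

/-- The simple root `α_s` in `RΛ ≅ (B → ℝ)`. -/
noncomputable def simpleRoot {B : Type*} [DecidableEq B] (s : B) : B → ℝ := Pi.single s 1

/-- The set of real roots: the `W`-orbit of the simple roots under the Tits representation. -/
def rootSet {B : Type*} [DecidableEq B] {W : Type*} [Group W]
    (ρ : W →* ((B → ℝ) ≃ₗ[ℝ] (B → ℝ))) : Set (B → ℝ) :=
  {v | ∃ (w : W) (s : B), v = ρ w (simpleRoot s)}

/-- The set of positive real roots. -/
def posRootSet {B : Type*} [DecidableEq B] {W : Type*} [Group W]
    (ρ : W →* ((B → ℝ) ≃ₗ[ℝ] (B → ℝ))) : Set (B → ℝ) :=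
  {v ∈ rootSet ρ | ∀ i, 0 ≤ v i}

/-- The set `K = {v ∈ ℝ_{≥0}Λ : B(v, α_s) ≤ 0 for all s}`. -/
noncomputable def coneK {B : Type*} [Fintype B] [DecidableEq B] (M : CoxeterMatrix B) :
    Set (B → ℝ) :=
  {v | (∀ i, 0 ≤ v i) ∧ ∀ s, coxForm M v (simpleRoot s) ≤ 0}

/-- The closed imaginary cone `I = closure (W · K)`. -/
noncomputable def imagCone {B : Type*} [Fintype B] [DecidableEq B] (M : CoxeterMatrix B)
    {W : Type*} [Group W] (ρ : W →* ((B → ℝ) ≃ₗ[ℝ] (B → ℝ))) : Set (B → ℝ) :=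
  closure {v | ∃ (w : W), ∃ k ∈ coneK M, v = ρ w k}


/-- The pairing between the complexified dual space `(RΛ)*_ℂ = Hom_ℝ(RΛ, ℂ)` (in coordinates:
`z : B → ℂ`, with `z i = Z(α_i)`) and `RΛ`. -/
noncomputable def evalC {B : Type*} [Fintype B] (z : B → ℂ) (v : B → ℝ) : ℂ := ∑ i, (v i : ℂ) * z i

/-!
STATEMENT 8: The union of the hyperplanes H_v over nonzero v in the closed imaginary cone is
closed in (RΛ)*_ℂ; consequently its complement Υ is open.
-/
section Aux

lemma coxForm_smul {B : Type*} [Fintype B] (M : CoxeterMatrix B) (c : ℝ) (v w : B → ℝ) :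
    coxForm M (c • v) w = c * coxForm M v w := by
  simp only [coxForm, Finset.mul_sum, Pi.smul_apply, smul_eq_mul]
  congr 1; ext s; congr 1; ext t; ring

lemma smul_mem_imagCone {B : Type*} [Fintype B] [DecidableEq B] (M : CoxeterMatrix B)
    {W : Type*} [Group W] (ρ : W →* ((B → ℝ) ≃ₗ[ℝ] (B → ℝ)))
    {c : ℝ} (hc : 0 ≤ c) {v : B → ℝ} (hv : v ∈ imagCone M ρ) :
    c • v ∈ imagCone M ρ := by
  refine map_mem_closure (continuous_const_smul c) hv ?_
  rintro x ⟨w, k, hk, rfl⟩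
  refine ⟨w, c • k, ⟨fun i => by simpa using mul_nonneg hc (hk.1 i),
    fun s => by rw [coxForm_smul]; exact mul_nonpos_of_nonneg_of_nonpos hc (hk.2 s)⟩, ?_⟩
  simp [map_smul]

end Aux

theorem isClosed_imagCone_hyperplanes
    {B : Type*} [Fintype B] [DecidableEq B] (M : CoxeterMatrix B)
    {W : Type*} [Group W] (cs : CoxeterSystem M W)
    (ρ : W →* ((B → ℝ) ≃ₗ[ℝ] (B → ℝ)))
    (hρ : ∀ (s : B) (v : B → ℝ),
      ρ (cs.simple s) v = v - coxForm M (simpleRoot s) v • simpleRoot s) :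
    IsClosed {z : B → ℂ | ∃ v ∈ imagCone M ρ, v ≠ 0 ∧ evalC z v = 0} ∧
      IsOpen {z : B → ℂ | ∀ v ∈ imagCone M ρ, v ≠ 0 → evalC z v ≠ 0} := by
  set K' : Set (B → ℝ) := imagCone M ρ ∩ Metric.sphere 0 1 with hK'def
  have hK'c : IsCompact K' :=
    (isCompact_sphere (0 : B → ℝ) 1).inter_left (isClosed_closure)
  have : CompactSpace K' := isCompact_iff_compactSpace.mp hK'c
  -- the set as an image of a closed set under projection from compact × space
  have hcont : Continuous fun p : K' × (B → ℂ) => evalC p.2 (p.1 : B → ℝ) := by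
    unfold evalC
    exact continuous_finset_sum _ fun i _ =>
      ((Complex.continuous_ofReal.comp ((continuous_apply i).comp
        (continuous_subtype_val.comp continuous_fst))).mul
        ((continuous_apply i).comp continuous_snd))
  have hCclosed : IsClosed {p : K' × (B → ℂ) | evalC p.2 (p.1 : B → ℝ) = 0} :=
    isClosed_eq hcont continuous_const
  have himg : IsClosed (Prod.snd '' {p : K' × (B → ℂ) | evalC p.2 (p.1 : B → ℝ) = 0}) :=
    isClosedMap_snd_of_compactSpace _ hCclosed
  have hset : {z : B → ℂ | ∃ v ∈ imagCone M ρ, v ≠ 0 ∧ evalC z v = 0}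
      = Prod.snd '' {p : K' × (B → ℂ) | evalC p.2 (p.1 : B → ℝ) = 0} := by
    ext z
    constructor
    · rintro ⟨v, hvI, hv0, hz⟩
      have hn : ‖v‖ ≠ 0 := norm_ne_zero_iff.mpr hv0
      refine ⟨(⟨‖v‖⁻¹ • v, ?_, ?_⟩, z), ?_, rfl⟩
      · exact smul_mem_imagCone M ρ (inv_nonneg.mpr (norm_nonneg v)) hvI
      · simp [norm_smul, inv_mul_cancel₀ hn]
      · show evalC z (‖v‖⁻¹ • v) = 0
        unfold evalC at hz ⊢
        simp only [Pi.smul_apply, smul_eq_mul, Complex.ofReal_mul]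
        simp only [mul_assoc, ← Finset.mul_sum, hz, mul_zero]
    · rintro ⟨⟨⟨v, hvI, hvs⟩, z'⟩, hz, rfl⟩
      refine ⟨v, hvI, ?_, hz⟩
      intro h
      rw [h] at hvs
      simp at hvs
  have hclosed : IsClosed {z : B → ℂ | ∃ v ∈ imagCone M ρ, v ≠ 0 ∧ evalC z v = 0} := by
    rw [hset]; exact himg
  refine ⟨hclosed, ?_⟩
  have : {z : B → ℂ | ∀ v ∈ imagCone M ρ, v ≠ 0 → evalC z v ≠ 0}
      = {z : B → ℂ | ∃ v ∈ imagCone M ρ, v ≠ 0 ∧ evalC z v = 0}ᶜ := by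
    ext z; simp [not_exists, not_and]
  rw [this]
  exact hclosed.isOpen_compl
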